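/- Let n, m be positive integers with n ≢ m (mod 2). If d : ℝ → ℝ is an odd continuous function and g : ℝ → ℝ is an even continuous function, then for every a > 0, ∫_{−a}^{a} 𝓛ₙ(x) · 𝓛ₘ(x) dx = 0. -/
import Mathlib

/-- Generalized Fibonacci polynomials of Lucas type:
`𝓛₀ = p₀`, `𝓛₁ = p₁`, `𝓛ₙ = d·𝓛ₙ₋₁ + g·𝓛ₙ₋₂` where `d = (2/p₀)·p₁`. -/
noncomputable def GFPL (p0 : ℝ) (p1 g : ℝ → ℝ) : ℕ → ℝ → ℝ
  | 0 => fun _ => p0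
  | 1 => fun x => p1 x
  | n + 2 => fun x =>
      (2 / p0) * p1 x * GFPL p0 p1 g (n + 1) x + g x * GFPL p0 p1 g n x

lemma gfpl_parity (p0 : ℝ) (hp0 : p0 ≠ 0) (p1 g : ℝ → ℝ)
    (hd : ∀ x, (2 / p0) * p1 (-x) = -((2 / p0) * p1 x))
    (hg : ∀ x, g (-x) = g x) :
    ∀ n x, GFPL p0 p1 g n (-x) = (-1 : ℝ) ^ n * GFPL p0 p1 g n x := by
  have hp1 : ∀ x, p1 (-x) = - p1 x := by
    intro x
    have h := hd x
    have h2 : (2 / p0) ≠ 0 := by positivity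
    field_simp at h
    linarith
  intro n
  induction n using Nat.twoStepInduction with
  | zero => intro x; simp [GFPL]
  | one => intro x; simp [GFPL, hp1]
  | more n ih1 ih2 =>
      intro x
      simp only [GFPL, hp1 x, hg x, ih1 x, ih2 x]
      ring

lemma gfpl_continuous (p0 : ℝ) (p1 g : ℝ → ℝ)
    (hdc : Continuous p1) (hgc : Continuous g) :
    ∀ n, Continuous (GFPL p0 p1 g n) := by
  intro n
  induction n using Nat.twoStepInduction with
  | zero => simpa [GFPL] using continuous_const
  | one => simpa [GFPL] using hdc
  | more n ih1 ih2 =>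
      show Continuous fun x =>
        (2 / p0) * p1 x * GFPL p0 p1 g (n + 1) x + g x * GFPL p0 p1 g n x
      fun_prop

theorem gfpl_orthogonal_diff_parity (p0 : ℝ)
    (hp0 : p0 = 1 ∨ p0 = -1 ∨ p0 = 2 ∨ p0 = -2)
    (p1 g : ℝ → ℝ)
    (hdc : Continuous p1) (hgc : Continuous g)
    (hd : ∀ x, (2 / p0) * p1 (-x) = -((2 / p0) * p1 x))
    (hg : ∀ x, g (-x) = g x)
    (n m : ℕ) (hn : 0 < n) (hm : 0 < m) (hnm : n % 2 ≠ m % 2)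
    (a : ℝ) (ha : 0 < a) :
    ∫ x in (-a)..a, GFPL p0 p1 g n x * GFPL p0 p1 g m x = 0 := by
  have hp0' : p0 ≠ 0 := by rcases hp0 with h | h | h | h <;> rw [h] <;> norm_num
  set f := fun x => GFPL p0 p1 g n x * GFPL p0 p1 g m x with hf
  have hodd : ∀ x, f (-x) = - f x := by
    intro x
    have hpar := gfpl_parity p0 hp0' p1 g hd hg
    simp only [hf, hpar n x, hpar m x]
    have : (-1 : ℝ) ^ n * (-1 : ℝ) ^ m = -1 := by
      rw [← pow_add]
      have : Odd (n + m) := Nat.odd_iff.mpr (by omega)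
      exact Odd.neg_one_pow this
    linear_combination (GFPL p0 p1 g n x * GFPL p0 p1 g m x) * this
  have h1 : (∫ x in (-a)..a, f (-x)) = ∫ x in (-a)..a, f x := by
    rw [intervalIntegral.integral_comp_neg f]
    simp
  have h2 : (∫ x in (-a)..a, f (-x)) = - ∫ x in (-a)..a, f x := by
    simp only [hodd]
    exact intervalIntegral.integral_neg
  have := h1.symm.trans h2
  linarith
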